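/- Let X be a smooth manifold and c : X × Y → ℝ a cost satisfying the twist condition: for y₁ ≠ y₂, the map x ↦ c(x,y₁) − c(x,y₂) has no critical points. Suppose q, r satisfy c(x,y) − q(x) − r(y) ≥ 0, and let Z be the zero set of this expression. Then for every x₀ at which q is differentiable, there is at most one y ∈ Y with (x₀, y) ∈ Z; i.e., Z ∩ (Dom Dq × Y) is contained in the graph of a single map f₁ : Dom Dq → Y. -/

import Mathlib

open Manifold

lemma min_mfderiv_zero
    {E H X : Type*} [NormedAddCommGroup E] [NormedSpace ℝ E]
    [TopologicalSpace H] (I : ModelWithCorners ℝ E H) [I.Boundaryless]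
    [TopologicalSpace X] [ChartedSpace H X]
    (g : X → ℝ) (x₀ : X) (hg : MDifferentiableAt I 𝓘(ℝ, ℝ) g x₀)
    (hmin : ∀ x, g x₀ ≤ g x) : mfderiv I 𝓘(ℝ, ℝ) g x₀ = 0 := by
  rw [hg.mfderiv, I.range_eq_univ, fderivWithin_univ]
  apply IsLocalMin.fderiv_eq_zero
  apply Filter.Eventually.of_forall
  intro z
  simp only [writtenInExtChartAt, Function.comp_apply, extChartAt_model_space_eq_id,
      PartialEquiv.refl_coe, id_eq]
  rw [(extChartAt I x₀).left_inv (mem_extChartAt_source (I := I) x₀)]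
  exact hmin _

/-- Under the twist condition (for `y₁ ≠ y₂` the map `x ↦ c(x,y₁) − c(x,y₂)` has
no critical points), the zero set `Z` of `c(x,y) − q(x) − r(y) ≥ 0` meets each
fibre `{x₀} × Y` with `q` differentiable at `x₀` in at most one point, i.e. it is
contained in the graph of a single map on `Dom Dq`. -/
theorem twist_implies_graph
    {E H X : Type*} [NormedAddCommGroup E] [NormedSpace ℝ E]
    [TopologicalSpace H] (I : ModelWithCorners ℝ E H) [I.Boundaryless]
    [TopologicalSpace X] [ChartedSpace H X]
    {Y : Type*} (c : X × Y → ℝ) (q : X → ℝ) (r : Y → ℝ)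
    (hc : ∀ y, MDifferentiable I 𝓘(ℝ, ℝ) (fun x => c (x, y)))
    (htwist : ∀ y₁ y₂ : Y, y₁ ≠ y₂ →
      ∀ x, mfderiv I 𝓘(ℝ, ℝ) (fun x => c (x, y₁) - c (x, y₂)) x ≠ 0)
    (hpos : ∀ x y, 0 ≤ c (x, y) - q x - r y) :
    ∀ x₀, MDifferentiableAt I 𝓘(ℝ, ℝ) q x₀ →
      ∀ y₁ y₂ : Y, c (x₀, y₁) = q x₀ + r y₁ → c (x₀, y₂) = q x₀ + r y₂ → y₁ = y₂ := by
  intro x₀ hq y₁ y₂ h1 h2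
  by_contra hne
  apply htwist y₁ y₂ hne x₀
  -- the derivative of each x ↦ c(x,yᵢ) - q x - r yᵢ vanishes at x₀ (global min)
  have key : ∀ y : Y, c (x₀, y) = q x₀ + r y →
      mfderiv I 𝓘(ℝ, ℝ) (fun x => c (x, y)) x₀ = mfderiv I 𝓘(ℝ, ℝ) q x₀ := by
    intro y hy
    have hdiff : MDifferentiableAt I 𝓘(ℝ, ℝ) ((fun x => c (x, y)) - q) x₀ :=
      ((hc y) x₀).sub hq
    have hzero : mfderiv I 𝓘(ℝ, ℝ) ((fun x => c (x, y)) - q) x₀ = 0 := by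
      apply min_mfderiv_zero I _ x₀ hdiff
      intro x
      simp only [Pi.sub_apply]
      have h0 := hpos x y
      have h1 := hpos x₀ y
      linarith [hy]
    have := mfderiv_sub ((hc y) x₀) hq
    rw [hzero] at this
    exact (sub_eq_zero.mp this.symm)
  have e1 := key y₁ h1
  have e2 := key y₂ h2
  have hsub : mfderiv I 𝓘(ℝ, ℝ) ((fun x => c (x, y₁)) - fun x => c (x, y₂)) x₀ = 0 := by
    rw [mfderiv_sub ((hc y₁) x₀) ((hc y₂) x₀), e1, e2]
    exact sub_self _
  have : (fun x => c (x, y₁) - c (x, y₂)) = ((fun x => c (x, y₁)) - fun x => c (x, y₂)) := rfl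
  rw [this, hsub]
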